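/- Let G be a bipartite graph on vertex set Ω₁ ⊔ Ω₂ and suppose U₁ ⊆ Ω₁, U₂ ⊆ Ω₂ are cross-independent (no edges between U₁ and U₂). Suppose there exist a real number α, real numbers γ_{x,y} for each edge x∼y, and a symmetric entrywise-nonnegative matrix Z indexed by Ω₁ ⊔ Ω₂ such that the matrix S = (1/2)·[[αI, -J],[-J, αI]] + Σ_{x∼y} γ_{x,y}·[[0, E_{x,y}],[E_{y,x}, 0]] - Z is positive semidefinite. Then |U₁|·|U₂| ≤ α². -/

import Mathlib

open Matrix

/-- SDP duality bound: if a feasible dual certificate (α, γ, Z) with S ⪰ 0 exists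
for the bipartite graph with adjacency Adj, then any cross-independent pair
(U₁, U₂) satisfies |U₁|·|U₂| ≤ α². -/
theorem stmt_15 {Ω₁ Ω₂ : Type*} [Fintype Ω₁] [Fintype Ω₂] [DecidableEq Ω₁] [DecidableEq Ω₂]
    (Adj : Ω₁ → Ω₂ → Prop) [∀ x y, Decidable (Adj x y)]
    (U₁ : Finset Ω₁) (U₂ : Finset Ω₂)
    (hcross : ∀ x ∈ U₁, ∀ y ∈ U₂, ¬Adj x y)
    (α : ℝ) (γ : Ω₁ → Ω₂ → ℝ)
    (Z S : Matrix (Ω₁ ⊕ Ω₂) (Ω₁ ⊕ Ω₂) ℝ)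
    (hZsymm : Z.IsSymm) (hZnonneg : ∀ a b, 0 ≤ Z a b)
    (hS11 : ∀ x x' : Ω₁, S (Sum.inl x) (Sum.inl x')
      = (1 / 2) * α * (if x = x' then 1 else 0) - Z (Sum.inl x) (Sum.inl x'))
    (hS22 : ∀ y y' : Ω₂, S (Sum.inr y) (Sum.inr y')
      = (1 / 2) * α * (if y = y' then 1 else 0) - Z (Sum.inr y) (Sum.inr y'))
    (hS12 : ∀ (x : Ω₁) (y : Ω₂), S (Sum.inl x) (Sum.inr y)
      = -(1 / 2) + (if Adj x y then γ x y else 0) - Z (Sum.inl x) (Sum.inr y))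
    (hS21 : ∀ (x : Ω₁) (y : Ω₂), S (Sum.inr y) (Sum.inl x) = S (Sum.inl x) (Sum.inr y))
    (hSpsd : S.PosSemidef) :
    (U₁.card : ℝ) * (U₂.card : ℝ) ≤ α ^ 2 := by
  rcases U₁.eq_empty_or_nonempty with h1 | h1
  · simp [h1]; positivity
  rcases U₂.eq_empty_or_nonempty with h2 | h2
  · simp [h2]; positivity
  set m : ℝ := (U₁.card : ℝ) with hm_def
  set n : ℝ := (U₂.card : ℝ) with hn_def
  have hm : 0 < m := by rw [hm_def]; exact_mod_cast Finset.card_pos.mpr h1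
  have hn : 0 < n := by rw [hn_def]; exact_mod_cast Finset.card_pos.mpr h2
  set a : ℝ := (Real.sqrt m)⁻¹ with ha_def
  set b : ℝ := (Real.sqrt n)⁻¹ with hb_def
  have ha : 0 ≤ a := by positivity
  have hb : 0 ≤ b := by positivity
  set v : Ω₁ ⊕ Ω₂ → ℝ :=
    Sum.elim (fun x => if x ∈ U₁ then a else 0) (fun y => if y ∈ U₂ then b else 0) with hv_def
  have hvnn : ∀ i, 0 ≤ v i := by
    rintro (x | y) <;> simp only [hv_def, Sum.elim_inl, Sum.elim_inr] <;> split <;> simp [ha, hb]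
  have hv : 0 ≤ v ⬝ᵥ S *ᵥ v := by
    have := hSpsd.dotProduct_mulVec_nonneg v
    simpa using this
  have hZq : 0 ≤ v ⬝ᵥ Z *ᵥ v := by
    apply Finset.sum_nonneg
    intro i _
    refine mul_nonneg (hvnn i) (Finset.sum_nonneg fun j _ => mul_nonneg (hZnonneg _ _) (hvnn j))
  -- entries of S + Z
  have hM12 : ∀ (x : Ω₁) (y : Ω₂), x ∈ U₁ → y ∈ U₂ →
      S (Sum.inl x) (Sum.inr y) + Z (Sum.inl x) (Sum.inr y) = -(1/2) := by
    intro x y hx hy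
    rw [hS12]
    simp [hcross x hx y hy]
  have hZ21 : ∀ (x : Ω₁) (y : Ω₂), Z (Sum.inr y) (Sum.inl x) = Z (Sum.inl x) (Sum.inr y) := by
    intro x y
    have := congrFun (congrFun hZsymm (Sum.inl x)) (Sum.inr y)
    simpa [Matrix.transpose_apply] using this
  have hM21 : ∀ (x : Ω₁) (y : Ω₂), x ∈ U₁ → y ∈ U₂ →
      S (Sum.inr y) (Sum.inl x) + Z (Sum.inr y) (Sum.inl x) = -(1/2) := by
    intro x y hx hy
    rw [hS21, hZ21]
    exact hM12 x y hx hy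
  -- the quadratic form of S + Z
  have hw1 : ∀ x ∈ U₁, ((S + Z) *ᵥ v) (Sum.inl x) = a * ((1/2)*α) - (1/2)*(n*b) := by
    intro x hx
    simp only [Matrix.mulVec, dotProduct, Fintype.sum_sum_type,
      hv_def, Sum.elim_inl, Sum.elim_inr]
    have e1 : ∀ x' : Ω₁, (S + Z) (Sum.inl x) (Sum.inl x') *
        (if x' ∈ U₁ then a else 0) = if x' = x then a * ((1/2)*α) else 0 := by
      intro x'
      rw [Matrix.add_apply, hS11]
      rcases eq_or_ne x' x with rfl | hne
      · simp [hx]; ring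
      · simp [hne, Ne.symm hne]
    have e2 : ∀ y : Ω₂, (S + Z) (Sum.inl x) (Sum.inr y) *
        (if y ∈ U₂ then b else 0) = if y ∈ U₂ then -(1/2)*b else 0 := by
      intro y
      by_cases hy : y ∈ U₂
      · rw [if_pos hy, if_pos hy, Matrix.add_apply, hM12 x y hx hy]
      · simp [hy]
    rw [Finset.sum_congr rfl (fun x' _ => e1 x'),
      Finset.sum_congr rfl (fun y _ => e2 y),
      Finset.sum_ite_eq' Finset.univ x, Finset.sum_ite_mem, Finset.univ_inter,
      Finset.sum_const, nsmul_eq_mul, ← hn_def]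
    simp only [Finset.mem_univ, if_pos]
    ring
  have hw2 : ∀ y ∈ U₂, ((S + Z) *ᵥ v) (Sum.inr y) = -(1/2)*(m*a) + b * ((1/2)*α) := by
    intro y hy
    simp only [Matrix.mulVec, dotProduct, Fintype.sum_sum_type,
      hv_def, Sum.elim_inl, Sum.elim_inr]
    have e1 : ∀ x : Ω₁, (S + Z) (Sum.inr y) (Sum.inl x) *
        (if x ∈ U₁ then a else 0) = if x ∈ U₁ then -(1/2)*a else 0 := by
      intro x
      by_cases hx : x ∈ U₁
      · rw [if_pos hx, if_pos hx, Matrix.add_apply, hM21 x y hx hy]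
      · simp [hx]
    have e2 : ∀ y' : Ω₂, (S + Z) (Sum.inr y) (Sum.inr y') *
        (if y' ∈ U₂ then b else 0) = if y' = y then b * ((1/2)*α) else 0 := by
      intro y'
      rw [Matrix.add_apply, hS22]
      rcases eq_or_ne y' y with rfl | hne
      · simp [hy]; ring
      · simp [hne, Ne.symm hne]
    rw [Finset.sum_congr rfl (fun x _ => e1 x),
      Finset.sum_congr rfl (fun y' _ => e2 y'),
      Finset.sum_ite_eq' Finset.univ y, Finset.sum_ite_mem, Finset.univ_inter,
      Finset.sum_const, nsmul_eq_mul, ← hm_def]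
    simp only [Finset.mem_univ, if_pos]
    ring
  have hp : (0:ℝ) < Real.sqrt m := Real.sqrt_pos.mpr hm
  have hq : (0:ℝ) < Real.sqrt n := Real.sqrt_pos.mpr hn
  have hp2 : Real.sqrt m * Real.sqrt m = m := Real.mul_self_sqrt hm.le
  have hq2 : Real.sqrt n * Real.sqrt n = n := Real.mul_self_sqrt hn.le
  have hpq : Real.sqrt (m * n) = Real.sqrt m * Real.sqrt n := Real.sqrt_mul hm.le n
  have hma : m * (a * a) = 1 := by
    rw [ha_def, ← mul_inv, hp2]
    exact mul_inv_cancel₀ hm.ne'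
  have hnb : n * (b * b) = 1 := by
    rw [hb_def, ← mul_inv, hq2]
    exact mul_inv_cancel₀ hn.ne'
  have hc : m * n * (a * b) = Real.sqrt (m * n) := by
    calc m * n * (a * b) = (Real.sqrt m * Real.sqrt m) * (Real.sqrt n * Real.sqrt n) * (a * b) := by
          rw [hp2, hq2]
      _ = Real.sqrt (m * n) := by
          rw [hpq, ha_def, hb_def]
          field_simp
  have hcalc : v ⬝ᵥ (S + Z) *ᵥ v = α - Real.sqrt (m * n) := by
    simp only [dotProduct, Fintype.sum_sum_type]
    have t1 : ∀ x : Ω₁, v (Sum.inl x) * ((S + Z) *ᵥ v) (Sum.inl x)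
        = if x ∈ U₁ then a * (a * ((1/2)*α) - (1/2)*(n*b)) else 0 := by
      intro x
      by_cases hx : x ∈ U₁
      · rw [if_pos hx, hw1 x hx]
        simp only [hv_def, Sum.elim_inl, if_pos hx]
      · simp only [hv_def, Sum.elim_inl, if_neg hx, zero_mul]
    have t2 : ∀ y : Ω₂, v (Sum.inr y) * ((S + Z) *ᵥ v) (Sum.inr y)
        = if y ∈ U₂ then b * (-(1/2)*(m*a) + b * ((1/2)*α)) else 0 := by
      intro y
      by_cases hy : y ∈ U₂
      · rw [if_pos hy, hw2 y hy]
        simp only [hv_def, Sum.elim_inr, if_pos hy]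
      · simp only [hv_def, Sum.elim_inr, if_neg hy, zero_mul]
    rw [Finset.sum_congr rfl (fun x _ => t1 x), Finset.sum_congr rfl (fun y _ => t2 y),
      Finset.sum_ite_mem, Finset.univ_inter, Finset.sum_const, nsmul_eq_mul, ← hm_def,
      Finset.sum_ite_mem, Finset.univ_inter, Finset.sum_const, nsmul_eq_mul, ← hn_def]
    linear_combination ((1/2)*α) * hma + ((1/2)*α) * hnb - hc
  have hSq : v ⬝ᵥ (S + Z) *ᵥ v = v ⬝ᵥ S *ᵥ v + v ⬝ᵥ Z *ᵥ v := by
    rw [Matrix.add_mulVec, dotProduct_add]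
  have hsqrt : Real.sqrt (m * n) ≤ α := by
    nlinarith [hv, hZq, hcalc, hSq]
  calc m * n = Real.sqrt (m * n) ^ 2 := (Real.sq_sqrt (by positivity)).symm
    _ ≤ α ^ 2 := by
        apply pow_le_pow_left₀ (Real.sqrt_nonneg _) hsqrt
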